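/- Let G = {A | C} be a short dicotic game with exactly one left option A and one right option C, where A is an atomic-reversible left option (A has a right option B with no left options and B ≼ G (mod D⁻)) and C is an atomic-reversible right option (C has a left option B' with no right options and B' ≽ G (mod D⁻)). Then G = 0 (mod D⁻). -/

import Mathlib

/-! `SetTheory.PGame` has been removed from Mathlib; the following reproduces the
definitions of the December 2024 Mathlib that this file uses, with their old meaning. -/

universe u

namespace SetTheory

inductive PGame : Type (u + 1)
  | mk : ∀ α β : Type u, (α → PGame) → (β → PGame) → PGame

namespace PGame

def LeftMoves : PGame → Type u
  | mk l _ _ _ => l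

def RightMoves : PGame → Type u
  | mk _ r _ _ => r

def moveLeft : ∀ g : PGame, LeftMoves g → PGame
  | mk _l _ L _ => L

def moveRight : ∀ g : PGame, RightMoves g → PGame
  | mk _ _r _ R => R

inductive IsOption : PGame → PGame → Prop
  | moveLeft {x : PGame} (i : x.LeftMoves) : IsOption (x.moveLeft i) x
  | moveRight {x : PGame} (i : x.RightMoves) : IsOption (x.moveRight i) x

noncomputable def birthday : PGame.{u} → Ordinal.{u}
  | ⟨_, _, xL, xR⟩ =>
    max (Ordinal.lsub.{u, u} fun i => birthday (xL i)) (Ordinal.lsub.{u, u} fun i => birthday (xR i))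

theorem birthday_moveLeft_lt {x : PGame} (i : x.LeftMoves) :
    (x.moveLeft i).birthday < x.birthday := by
  cases x
  rw [birthday]
  exact lt_max_of_lt_left (Ordinal.lt_lsub _ i)

theorem birthday_moveRight_lt {x : PGame} (i : x.RightMoves) :
    (x.moveRight i).birthday < x.birthday := by
  cases x
  rw [birthday]
  exact lt_max_of_lt_right (Ordinal.lt_lsub _ i)

instance : Zero PGame :=
  ⟨⟨PEmpty, PEmpty, PEmpty.elim, PEmpty.elim⟩⟩

def star : PGame.{u} :=
  ⟨PUnit, PUnit, fun _ => 0, fun _ => 0⟩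

def neg : PGame → PGame
  | ⟨l, r, L, R⟩ => ⟨r, l, fun i => neg (R i), fun i => neg (L i)⟩

instance : Neg PGame :=
  ⟨neg⟩

noncomputable instance : Add PGame.{u} :=
  ⟨fun x y => by
    induction x generalizing y with | mk xl xr _ _ IHxl IHxr => _
    induction y with | mk yl yr yL yR IHyl IHyr => _
    have y := mk yl yr yL yR
    refine ⟨xl ⊕ yl, xr ⊕ yr, Sum.rec ?_ ?_, Sum.rec ?_ ?_⟩
    · exact fun i => IHxl i y
    · exact IHyl
    · exact fun i => IHxr i y
    · exact IHyr⟩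

def Identical : PGame.{u} → PGame.{u} → Prop
  | mk _ _ xL xR, mk _ _ yL yR =>
    Relator.BiTotal (fun i j ↦ Identical (xL i) (yL j)) ∧
      Relator.BiTotal (fun i j ↦ Identical (xR i) (yR j))

end PGame

end SetTheory

open SetTheory PGame

namespace MisereDicot

def Follower (G' G : PGame) : Prop := Relation.ReflTransGen PGame.IsOption G' G

def IsShort (G : PGame) : Prop :=
  ∀ G', Follower G' G → Finite G'.LeftMoves ∧ Finite G'.RightMoves

def Dicot (G : PGame) : Prop :=
  ∀ G', Follower G' G → (IsEmpty G'.LeftMoves ↔ IsEmpty G'.RightMoves)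

mutual
def LeftWinsFirst (G : PGame) : Prop :=
  IsEmpty G.LeftMoves ∨ ∃ i, ¬ RightWinsFirst (G.moveLeft i)
termination_by G.birthday
decreasing_by exact PGame.birthday_moveLeft_lt i

def RightWinsFirst (G : PGame) : Prop :=
  IsEmpty G.RightMoves ∨ ∃ j, ¬ LeftWinsFirst (G.moveRight j)
termination_by G.birthday
decreasing_by exact PGame.birthday_moveRight_lt j
end

inductive MOutcome : Type
  | L | N | P | R
deriving DecidableEq

instance : LE MOutcome := ⟨fun a b => a = b ∨ a = .R ∨ b = .L⟩

noncomputable def outcome (G : PGame) : MOutcome := by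
  classical
  exact if LeftWinsFirst G then (if RightWinsFirst G then .N else .L)
        else (if RightWinsFirst G then .R else .P)

def Dge (G H : PGame) : Prop :=
  ∀ X : PGame, IsShort X → Dicot X → outcome (H + X) ≤ outcome (G + X)

def Deq (G H : PGame) : Prop :=
  ∀ X : PGame, IsShort X → Dicot X → outcome (G + X) = outcome (H + X)

def Dgt (G H : PGame) : Prop := Dge G H ∧ ¬ Deq G H

def DInvertible (G : PGame) : Prop :=
  ∃ H : PGame, IsShort H ∧ Dicot H ∧ Deq (G + H) 0

/-- The left option `G^L_i` is reversible through its right option `(G^L_i)^R_j ≼ G`. -/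
def LeftReversibleAt (G : PGame) (i : G.LeftMoves) (j : (G.moveLeft i).RightMoves) : Prop :=
  Dge G ((G.moveLeft i).moveRight j)

def RightReversibleAt (G : PGame) (j : G.RightMoves) (i : (G.moveRight j).LeftMoves) : Prop :=
  Dge ((G.moveRight j).moveLeft i) G

/-- `G` has a dominated left option (removable by the Domination theorem). -/
def LeftDominated (G : PGame) : Prop :=
  ∃ i i' : G.LeftMoves, ¬ (G.moveLeft i).Identical (G.moveLeft i') ∧
    Dge (G.moveLeft i') (G.moveLeft i)

def RightDominated (G : PGame) : Prop :=
  ∃ j j' : G.RightMoves, ¬ (G.moveRight j).Identical (G.moveRight j') ∧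
    Dge (G.moveRight j) (G.moveRight j')

/-- `G` has a non-atomic reversible left option (bypassable). -/
def LeftNonAtomicReversible (G : PGame) : Prop :=
  ∃ i j, LeftReversibleAt G i j ∧ Nonempty ((G.moveLeft i).moveRight j).LeftMoves

def RightNonAtomicReversible (G : PGame) : Prop :=
  ∃ j i, RightReversibleAt G j i ∧ Nonempty ((G.moveRight j).moveLeft i).RightMoves

/-- `G` has an atomic-reversible left option to which the atomic-reversibility
replacement applies nontrivially (i.e. changing the set of options): either some
other left option is a winning first move for Left (so the option is removable),
or the option is not already `*`. -/
def LeftAtomicReducible (G : PGame) : Prop :=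
  ∃ i j, LeftReversibleAt G i j ∧ IsEmpty ((G.moveLeft i).moveRight j).LeftMoves ∧
    ((∃ i', ¬ (G.moveLeft i').Identical (G.moveLeft i) ∧ ¬ RightWinsFirst (G.moveLeft i')) ∨
      ¬ (G.moveLeft i).Identical star)

def RightAtomicReducible (G : PGame) : Prop :=
  ∃ j i, RightReversibleAt G j i ∧ IsEmpty ((G.moveRight j).moveLeft i).RightMoves ∧
    ((∃ j', ¬ (G.moveRight j').Identical (G.moveRight j) ∧ ¬ LeftWinsFirst (G.moveRight j')) ∨
      ¬ (G.moveRight j).Identical star)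

/-- The Substitution theorem applies to `G`: `G = {A | C}` with `A` an
atomic-reversible left option and `C` an atomic-reversible right option. -/
def SubstitutionReducible (G : PGame) : Prop :=
  (∀ i i' : G.LeftMoves, (G.moveLeft i).Identical (G.moveLeft i')) ∧
  (∀ j j' : G.RightMoves, (G.moveRight j).Identical (G.moveRight j')) ∧
  (∃ i j, LeftReversibleAt G i j ∧ IsEmpty ((G.moveLeft i).moveRight j).LeftMoves) ∧
  (∃ j i, RightReversibleAt G j i ∧ IsEmpty ((G.moveRight j).moveLeft i).RightMoves)

/-- `G` is in canonical form: no follower admits any of the misère-dicot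
simplifications (domination, non-atomic reversibility, atomic reversibility,
substitution) producing an equivalent game with a different set of options. -/
def CanonicalForm (G : PGame) : Prop :=
  ∀ G', Follower G' G →
    ¬ (LeftDominated G' ∨ RightDominated G' ∨
       LeftNonAtomicReversible G' ∨ RightNonAtomicReversible G' ∨
       LeftAtomicReducible G' ∨ RightAtomicReducible G' ∨
       SubstitutionReducible G')

/-- The game `*2 = {0, * | 0, *}`. -/
def star2 : PGame :=
  PGame.mk Bool Bool (fun b => cond b star 0) (fun b => cond b star 0)

open Classical in
/-- The adjoint `G°` of `G`. -/
noncomputable def adjoint : PGame → PGame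
  | PGame.mk l r L R =>
    if IsEmpty l ∧ IsEmpty r then star
    else if IsEmpty l then PGame.mk r PUnit (fun j => adjoint (R j)) (fun _ => 0)
    else if IsEmpty r then PGame.mk PUnit l (fun _ => 0) (fun i => adjoint (L i))
    else PGame.mk r l (fun j => adjoint (R j)) (fun i => adjoint (L i))

/-- A universe of short games: a class closed under taking options, disjunctive
sums and conjugates. -/
structure GameUniverse where
  mem : PGame → Prop
  short_mem : ∀ G, mem G → IsShort G
  isOption_mem : ∀ G G', mem G → PGame.IsOption G' G → mem G'
  add_mem : ∀ G H, mem G → mem H → mem (G + H)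
  neg_mem : ∀ G, mem G → mem (-G)

/-- `G ≽ H` modulo the universe `U`. -/
def UGe (U : GameUniverse) (G H : PGame) : Prop :=
  ∀ X : PGame, U.mem X → outcome (H + X) ≤ outcome (G + X)

/-- `G = H` modulo the universe `U`. -/
def UEq (U : GameUniverse) (G H : PGame) : Prop :=
  ∀ X : PGame, U.mem X → outcome (G + X) = outcome (H + X)

/-- `G ≻ H` modulo the universe `U`. -/
def UGt (U : GameUniverse) (G H : PGame) : Prop := UGe U G H ∧ ¬ UEq U G H

/-- `J` is invertible in the universe `U`. -/
def UInvertible (U : GameUniverse) (J : PGame) : Prop :=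
  ∃ J' : PGame, U.mem J' ∧ UEq U (J + J') 0

end MisereDicot

namespace SetTheory.PGame

@[elab_as_elim]
noncomputable def moveRecOn {C : PGame → Sort*} (x : PGame)
    (IH : ∀ y : PGame, (∀ i, C (y.moveLeft i)) → (∀ j, C (y.moveRight j)) → C y) : C x :=
  x.rec fun yl yr yL yR => IH (mk yl yr yL yR)

theorem leftMoves_add : ∀ x y : PGame.{u}, (x + y).LeftMoves = (x.LeftMoves ⊕ y.LeftMoves)
  | ⟨_, _, _, _⟩, ⟨_, _, _, _⟩ => rfl

theorem rightMoves_add : ∀ x y : PGame.{u}, (x + y).RightMoves = (x.RightMoves ⊕ y.RightMoves)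
  | ⟨_, _, _, _⟩, ⟨_, _, _, _⟩ => rfl

def toLeftMovesAdd {x y : PGame} : x.LeftMoves ⊕ y.LeftMoves ≃ (x + y).LeftMoves :=
  Equiv.cast (leftMoves_add x y).symm

def toRightMovesAdd {x y : PGame} : x.RightMoves ⊕ y.RightMoves ≃ (x + y).RightMoves :=
  Equiv.cast (rightMoves_add x y).symm

theorem add_moveLeft_inr (x : PGame) {y : PGame} (i : y.LeftMoves) :
    (x + y).moveLeft (toLeftMovesAdd (Sum.inr i)) = x + y.moveLeft i := by
  cases x; cases y; rfl

theorem add_moveRight_inr (x : PGame) {y : PGame} (i : y.RightMoves) :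
    (x + y).moveRight (toRightMovesAdd (Sum.inr i)) = x + y.moveRight i := by
  cases x; cases y; rfl

instance isEmpty_zero_leftMoves : IsEmpty (LeftMoves 0) :=
  show IsEmpty PEmpty from inferInstance

instance isEmpty_zero_rightMoves : IsEmpty (RightMoves 0) :=
  show IsEmpty PEmpty from inferInstance

end SetTheory.PGame

namespace MisereDicot

lemma MOutcome.le_def {a b : MOutcome} : a ≤ b ↔ (a = b ∨ a = .R ∨ b = .L) := Iff.rfl

lemma MOutcome.le_antisymm' {a b : MOutcome} (h1 : a ≤ b) (h2 : b ≤ a) : a = b := by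
  rcases MOutcome.le_def.mp h1 with h | h | h
  · exact h
  · rcases MOutcome.le_def.mp h2 with h' | h' | h' <;> simp_all
  · rcases MOutcome.le_def.mp h2 with h' | h' | h' <;> simp_all

lemma outcome_congr {G H : PGame} (h1 : LeftWinsFirst G ↔ LeftWinsFirst H)
    (h2 : RightWinsFirst G ↔ RightWinsFirst H) : outcome G = outcome H := by
  classical
  unfold outcome
  simp only [h1, h2]

lemma add_empty (X : PGame) : ∀ E : PGame, IsEmpty E.LeftMoves → IsEmpty E.RightMoves →
    (LeftWinsFirst (E + X) ↔ LeftWinsFirst X) ∧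
    (RightWinsFirst (E + X) ↔ RightWinsFirst X) := by
  induction X using PGame.moveRecOn with
  | _ X ihl ihr =>
    intro E hl hr
    constructor
    · rw [LeftWinsFirst, LeftWinsFirst]
      constructor
      · rintro (h | ⟨i, hi⟩)
        · rw [leftMoves_add] at h
          exact Or.inl (@Function.isEmpty _ _ h Sum.inr)
        · rw [← toLeftMovesAdd.apply_symm_apply i] at hi
          rcases h' : toLeftMovesAdd.symm i with i | i <;> rw [h'] at hi
          · exact hl.elim i
          · rw [add_moveLeft_inr] at hi
            exact Or.inr ⟨i, fun h => hi ((ihl i E hl hr).2.mpr h)⟩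
      · rintro (h | ⟨i, hi⟩)
        · left; rw [leftMoves_add, isEmpty_sum]; exact ⟨hl, h⟩
        · exact Or.inr ⟨toLeftMovesAdd (Sum.inr i), by
            rw [add_moveLeft_inr]; exact fun h => hi ((ihl i E hl hr).2.mp h)⟩
    · rw [RightWinsFirst, RightWinsFirst]
      constructor
      · rintro (h | ⟨j, hj⟩)
        · rw [rightMoves_add] at h
          exact Or.inl (@Function.isEmpty _ _ h Sum.inr)
        · rw [← toRightMovesAdd.apply_symm_apply j] at hj
          rcases h' : toRightMovesAdd.symm j with j | j <;> rw [h'] at hj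
          · exact hr.elim j
          · rw [add_moveRight_inr] at hj
            exact Or.inr ⟨j, fun h => hj ((ihr j E hl hr).1.mpr h)⟩
      · rintro (h | ⟨j, hj⟩)
        · left; rw [rightMoves_add, isEmpty_sum]; exact ⟨hr, h⟩
        · exact Or.inr ⟨toRightMovesAdd (Sum.inr j), by
            rw [add_moveRight_inr]; exact fun h => hj ((ihr j E hl hr).1.mp h)⟩

lemma outcome_add_empty {E : PGame} (hl : IsEmpty E.LeftMoves) (hr : IsEmpty E.RightMoves)
    (X : PGame) : outcome (E + X) = outcome X :=
  outcome_congr (add_empty X E hl hr).1 (add_empty X E hl hr).2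

/-- Substitution: if `G = {A | C}` with `A` an atomic-reversible
left option and `C` an atomic-reversible right option, then `G = 0` (mod `D⁻`). -/
theorem stmt12 (A C : PGame)
    (hs : IsShort (PGame.mk PUnit PUnit (fun _ => A) (fun _ => C)))
    (hd : Dicot (PGame.mk PUnit PUnit (fun _ => A) (fun _ => C)))
    (jB : A.RightMoves) (hBatom : IsEmpty (A.moveRight jB).LeftMoves)
    (hBrev : Dge (PGame.mk PUnit PUnit (fun _ => A) (fun _ => C)) (A.moveRight jB))
    (iB : C.LeftMoves) (hB'atom : IsEmpty (C.moveLeft iB).RightMoves)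
    (hB'rev : Dge (C.moveLeft iB) (PGame.mk PUnit PUnit (fun _ => A) (fun _ => C))) :
    Deq (PGame.mk PUnit PUnit (fun _ => A) (fun _ => C)) 0 := by
  set G := PGame.mk PUnit PUnit (fun _ => A) (fun _ => C) with hGdef
  have hFA : Follower A G :=
    Relation.ReflTransGen.single (PGame.IsOption.moveLeft (x := G) PUnit.unit)
  have hFC : Follower C G :=
    Relation.ReflTransGen.single (PGame.IsOption.moveRight (x := G) PUnit.unit)
  have hFB : Follower (A.moveRight jB) G :=
    Relation.ReflTransGen.head (PGame.IsOption.moveRight jB) hFA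
  have hFB' : Follower (C.moveLeft iB) G :=
    Relation.ReflTransGen.head (PGame.IsOption.moveLeft iB) hFC
  have hBr : IsEmpty (A.moveRight jB).RightMoves := (hd _ hFB).mp hBatom
  have hB'l : IsEmpty (C.moveLeft iB).LeftMoves := (hd _ hFB').mpr hB'atom
  intro X hX hdX
  have h1 : outcome ((A.moveRight jB) + X) ≤ outcome (G + X) := hBrev X hX hdX
  have h2 : outcome (G + X) ≤ outcome ((C.moveLeft iB) + X) := hB'rev X hX hdX
  rw [outcome_add_empty hBatom hBr] at h1
  rw [outcome_add_empty hB'l hB'atom] at h2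
  have h0 : outcome ((0 : PGame) + X) = outcome X := by
    exact outcome_add_empty PGame.isEmpty_zero_leftMoves PGame.isEmpty_zero_rightMoves X
  rw [h0]
  exact MOutcome.le_antisymm' h2 h1

end MisereDicot
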